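/- arXiv:1707.04214 — 2 statements merged into one kernel-verified Lean document; each statement's English description precedes it below -/
import Mathlib

section
/- For every n ≥ 1, the symmetrization identity Σ_{σ∈S_n} σ{ ∏_{i>j} 1/(1 - z_i/z_j) · ∏_{i>j+1} (1 - q z_i/z_j) · ∏_{i≥2} (1 - z_i) } = 1 holds in the field of rational functions ℚ(q, z_1, …, z_n). -/
open Finset

section Aux
variable {K : Type*} [Field K] (q : K)

/-- pairwise product piece 1 -/
noncomputable def P1 (n : ℕ) (y : Fin n → K) : K :=
  ∏ p ∈ Finset.univ.filter (fun p : Fin n × Fin n => p.2 < p.1), (1 - y p.1 / y p.2)⁻¹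

noncomputable def P2 (n : ℕ) (y : Fin n → K) : K :=
  ∏ p ∈ Finset.univ.filter (fun p : Fin n × Fin n => (p.2 : ℕ) + 1 < (p.1 : ℕ)),
    (1 - q * (y p.1 / y p.2))

noncomputable def P3 (n : ℕ) (y : Fin n → K) : K :=
  ∏ i ∈ Finset.univ.filter (fun i : Fin n => 0 < (i : ℕ)), (1 - y i)

noncomputable def AA (n : ℕ) (y : Fin n → K) : K := P1 n y * P2 q n y * P3 n y

lemma pair_prod_eq {n : ℕ} (r : Fin n → Fin n → Prop) [DecidableRel r] (F : Fin n → Fin n → K) :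
    ∏ p ∈ Finset.univ.filter (fun p : Fin n × Fin n => r p.1 p.2), F p.1 p.2
      = ∏ i : Fin n, ∏ j : Fin n, if r i j then F i j else 1 := by
  rw [Finset.prod_filter]
  exact Fintype.prod_prod_type' (fun i j => if r i j then F i j else 1)

lemma filter_pos_eq_erase (n : ℕ) :
    (Finset.univ.filter (fun i : Fin (n + 1) => 0 < (i : ℕ))) = Finset.univ.erase 0 := by
  ext i
  simp only [Finset.mem_filter, Finset.mem_univ, true_and, Finset.mem_erase, and_true]
  rw [Nat.pos_iff_ne_zero, Ne, Ne, Fin.ext_iff, Fin.val_zero]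

lemma P1_cons {n : ℕ} (a : K) (g : Fin n → K) :
    P1 (n + 1) (Fin.cons a g) = (∏ i : Fin n, (1 - g i / a)⁻¹) * P1 n g := by
  rw [P1, P1, Finset.prod_filter, Finset.prod_filter, Fintype.prod_prod_type,
    Fintype.prod_prod_type, Fin.prod_univ_succ]
  simp only [Fin.not_lt_zero, if_false, Finset.prod_const_one, one_mul]
  rw [← Finset.prod_mul_distrib]
  congr 1
  funext i
  rw [Fin.prod_univ_succ]
  simp [Fin.succ_lt_succ_iff, Fin.cons_succ, Fin.cons_zero, Fin.succ_pos]

lemma P2_cons {n : ℕ} (a : K) (g : Fin (n + 1) → K) :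
    P2 q (n + 2) (Fin.cons a g)
      = (∏ i ∈ Finset.univ.erase 0, (1 - q * (g i / a))) * P2 q (n + 1) g := by
  rw [← filter_pos_eq_erase, Finset.prod_filter, P2, P2, Finset.prod_filter,
    Finset.prod_filter, Fintype.prod_prod_type, Fintype.prod_prod_type, Fin.prod_univ_succ]
  simp only [Fin.val_zero, Fin.val_succ, Nat.not_lt_zero, if_false,
    Finset.prod_const_one, one_mul, Fin.cons_zero, Fin.cons_succ]
  rw [← Finset.prod_mul_distrib]
  congr 1
  funext i
  rw [Fin.prod_univ_succ]
  simp only [Fin.val_zero, Fin.val_succ, Fin.cons_zero, Fin.cons_succ,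
    Nat.add_lt_add_iff_right]

lemma P3_cons {n : ℕ} (a : K) (g : Fin n → K) :
    P3 (n + 1) (Fin.cons a g) = ∏ i : Fin n, (1 - g i) := by
  rw [P3, Finset.prod_filter, Fin.prod_univ_succ]
  simp [Fin.cons_succ]

lemma AA_cons {n : ℕ} (a : K) (g : Fin (n + 1) → K) :
    AA q (n + 2) (Fin.cons a g) * (1 - q * (g 0 / a))
      = AA q (n + 1) g * (1 - g 0)
        * ∏ i : Fin (n + 1), ((1 - g i / a)⁻¹ * (1 - q * (g i / a))) := by
  rw [AA, P1_cons, P2_cons, P3_cons, AA, Finset.prod_mul_distrib, P3, filter_pos_eq_erase,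
    ← Finset.mul_prod_erase Finset.univ (fun i => 1 - q * (g i / a)) (Finset.mem_univ 0),
    ← Finset.mul_prod_erase Finset.univ (fun i => 1 - g i) (Finset.mem_univ 0)]
  ring

lemma prod_swap_succ {n : ℕ} (p : Fin (n + 1)) (f : Fin (n + 1) → K) :
    ∏ i : Fin n, f (Equiv.swap 0 p i.succ) = ∏ m ∈ Finset.univ.erase p, f m := by
  have key : ∀ i : Fin n, Equiv.swap 0 p i.succ ≠ p := by
    intro i h
    exact Fin.succ_ne_zero i ((Equiv.swap 0 p).injective
      (h.trans (Equiv.swap_apply_left 0 p).symm))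
  have h1 : ∏ i : Fin n, f (Equiv.swap 0 p i.succ)
      = ∏ i : Fin n, (fun m => if m = p then 1 else f m) (Equiv.swap 0 p i.succ) :=
    Finset.prod_congr rfl fun i _ => by simp [key i]
  have h2 : (if p = p then (1:K) else f p)
        * ∏ i : Fin n, (fun m => if m = p then 1 else f m) (Equiv.swap 0 p i.succ)
      = ∏ m : Fin (n + 1), (if m = p then 1 else f m) := by
    rw [← Equiv.prod_comp (Equiv.swap 0 p) (fun m => if m = p then (1:K) else f m),
      Fin.prod_univ_succ, Equiv.swap_apply_left]
  have h3 : ∏ m : Fin (n + 1), (if m = p then (1:K) else f m)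
      = ∏ m ∈ Finset.univ.erase p, f m := by
    rw [← Finset.mul_prod_erase Finset.univ _ (Finset.mem_univ p), if_pos rfl, one_mul]
    exact Finset.prod_congr rfl fun m hm => if_neg (Finset.mem_erase.mp hm).1
  rw [h1, ← h3, ← h2, if_pos rfl, one_mul]

lemma lagrange_sum {n : ℕ} (y : Fin (n + 1) → K) (hinj : Function.Injective y) (t : K) :
    ∑ p : Fin (n + 1), (y p) ^ n * ∏ m ∈ Finset.univ.erase p, ((t - y m) / (y p - y m))
      = t ^ n := by
  have hdeg : (Polynomial.X ^ n : Polynomial K).degree < (Finset.univ : Finset (Fin (n+1))).card := by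
    rw [Polynomial.degree_X_pow, Finset.card_univ, Fintype.card_fin]
    exact_mod_cast Nat.lt_succ_self n
  have h := Lagrange.eq_interpolate (s := Finset.univ) (v := y) hinj.injOn hdeg
  have h2 := congrArg (Polynomial.eval t) h
  rw [Polynomial.eval_pow, Polynomial.eval_X, Lagrange.interpolate_apply,
    Polynomial.eval_finset_sum] at h2
  rw [h2]
  refine Finset.sum_congr rfl fun p _ => ?_
  rw [Polynomial.eval_mul, Polynomial.eval_C, Polynomial.eval_pow, Polynomial.eval_X,
    Lagrange.basis, Polynomial.eval_prod]
  congr 1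
  refine Finset.prod_congr rfl fun m _ => ?_
  rw [Lagrange.basisDivisor, Polynomial.eval_mul, Polynomial.eval_C, Polynomial.eval_sub,
    Polynomial.eval_X, Polynomial.eval_C, div_eq_mul_inv, mul_comm]

lemma sum_id1 {n : ℕ} (y : Fin (n + 1) → K) (hinj : Function.Injective y)
    (h0 : ∀ i, y i ≠ 0) :
    ∑ p : Fin (n + 1), ∏ m ∈ Finset.univ.erase p, ((1 - y m) * (1 - y m / y p)⁻¹) = 1 := by
  have L := lagrange_sum y hinj 1
  rw [one_pow] at L
  conv_rhs => rw [← L]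
  refine Finset.sum_congr rfl fun p _ => ?_
  have hcard : (Finset.univ.erase p).card = n := by
    rw [Finset.card_erase_of_mem (Finset.mem_univ p), Finset.card_univ, Fintype.card_fin]
    omega
  have step : ∏ m ∈ Finset.univ.erase p, ((1 - y m) * (1 - y m / y p)⁻¹)
      = ∏ m ∈ Finset.univ.erase p, (y p * ((1 - y m) / (y p - y m))) := by
    refine Finset.prod_congr rfl fun m hm => ?_
    have hp := h0 p
    have h1 : 1 - y m / y p = (y p - y m) / y p := by field_simp
    rw [h1, inv_div]
    ring
  rw [step, Finset.prod_mul_distrib, Finset.prod_const, hcard]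

lemma sum_id2 {n : ℕ} (y : Fin (n + 1) → K) (hinj : Function.Injective y)
    (h0 : ∀ i, y i ≠ 0) (hq : q ≠ 0) (u : K) (hu : u ≠ 0) (hqu : ∀ i, q * y i ≠ u) :
    ∑ p : Fin (n + 1), ((1 - q * (y p / u))⁻¹ * ∏ m ∈ Finset.univ.erase p, (1 - y m / y p)⁻¹)
      = ∏ i : Fin (n + 1), (1 - q * (y i / u))⁻¹ := by
  have hD : ∀ i, 1 - q * (y i / u) ≠ 0 := by
    intro i h
    apply hqu i
    have h2 : q * y i / u = 1 := by
      rw [mul_div_assoc]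
      exact (sub_eq_zero.mp h).symm
    exact (div_eq_one_iff_eq hu).mp h2
  conv_rhs => rw [Finset.prod_inv_distrib]
  refine eq_inv_of_mul_eq_one_left ?_
  rw [Finset.sum_mul]
  have key : ∀ p : Fin (n + 1),
      (1 - q * (y p / u))⁻¹ * (∏ m ∈ Finset.univ.erase p, (1 - y m / y p)⁻¹)
          * ∏ i : Fin (n + 1), (1 - q * (y i / u))
        = (q / u) ^ n * (y p ^ n * ∏ m ∈ Finset.univ.erase p, ((u / q - y m) / (y p - y m))) := by
    intro p
    have hcard : (Finset.univ.erase p).card = n := by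
      rw [Finset.card_erase_of_mem (Finset.mem_univ p), Finset.card_univ, Fintype.card_fin]
      omega
    rw [← Finset.mul_prod_erase Finset.univ (fun i => 1 - q * (y i / u)) (Finset.mem_univ p)]
    have hre : (∏ m ∈ Finset.univ.erase p, (1 - y m / y p)⁻¹)
          * ∏ m ∈ Finset.univ.erase p, (1 - q * (y m / u))
        = ∏ m ∈ Finset.univ.erase p, ((q / u) * (y p * ((u / q - y m) / (y p - y m)))) := by
      rw [← Finset.prod_mul_distrib]
      refine Finset.prod_congr rfl fun m hm => ?_
      have hmp : y p - y m ≠ 0 := sub_ne_zero.mpr (hinj.ne (Finset.mem_erase.mp hm).1.symm)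
      have hp := h0 p
      have h1 : 1 - y m / y p ≠ 0 := by
        rw [show 1 - y m / y p = (y p - y m) / y p by field_simp]
        exact div_ne_zero hmp hp
      field_simp
    calc (1 - q * (y p / u))⁻¹ * (∏ m ∈ Finset.univ.erase p, (1 - y m / y p)⁻¹)
          * ((1 - q * (y p / u)) * ∏ m ∈ Finset.univ.erase p, (1 - q * (y m / u)))
        = ((1 - q * (y p / u))⁻¹ * (1 - q * (y p / u)))
            * ((∏ m ∈ Finset.univ.erase p, (1 - y m / y p)⁻¹)
              * ∏ m ∈ Finset.univ.erase p, (1 - q * (y m / u))) := by ring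
      _ = (∏ m ∈ Finset.univ.erase p, (1 - y m / y p)⁻¹)
              * ∏ m ∈ Finset.univ.erase p, (1 - q * (y m / u)) := by
          rw [inv_mul_cancel₀ (hD p), one_mul]
      _ = ∏ m ∈ Finset.univ.erase p, ((q / u) * (y p * ((u / q - y m) / (y p - y m)))) := hre
      _ = (q / u) ^ n * (y p ^ n * ∏ m ∈ Finset.univ.erase p, ((u / q - y m) / (y p - y m))) := by
          rw [Finset.prod_mul_distrib, Finset.prod_mul_distrib, Finset.prod_const,
            Finset.prod_const, hcard]
  calc ∑ p : Fin (n+1), (1 - q * (y p / u))⁻¹ * (∏ m ∈ Finset.univ.erase p, (1 - y m / y p)⁻¹)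
          * ∏ i : Fin (n + 1), (1 - q * (y i / u))
      = ∑ p : Fin (n+1), (q / u) ^ n
          * (y p ^ n * ∏ m ∈ Finset.univ.erase p, ((u / q - y m) / (y p - y m))) :=
        Finset.sum_congr rfl fun p _ => key p
    _ = (q / u) ^ n * (u / q) ^ n := by
        rw [← Finset.mul_sum, lagrange_sum y hinj (u / q)]
    _ = 1 := by
        rw [← mul_pow, div_mul_div_comm, mul_comm q u, div_self (mul_ne_zero hu hq), one_pow]

lemma one_sub_div_ne_zero {a b : K} (hb : b ≠ 0) (hab : a ≠ b) : 1 - a / b ≠ 0 :=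
  fun h => hab ((div_eq_one_iff_eq hb).mp (sub_eq_zero.mp h).symm)

lemma sum_decomp {n : ℕ} (y : Fin (n + 2) → K) (φ : K → K)
    (h0 : ∀ i, y i ≠ 0) (hq2 : ∀ i j, i ≠ j → q * y i ≠ y j) :
    ∑ σ : Equiv.Perm (Fin (n + 2)), AA q (n + 2) (fun i => y (σ i)) * φ (y (σ 0))
      = ∑ p : Fin (n + 2), φ (y p)
          * (∏ m ∈ Finset.univ.erase p, ((1 - y m / y p)⁻¹ * (1 - q * (y m / y p))))
          * ∑ e : Equiv.Perm (Fin (n + 1)),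
              AA q (n + 1) (fun i => y (Equiv.swap 0 p (e i).succ))
                * ((1 - y (Equiv.swap 0 p (e 0).succ))
                  / (1 - q * (y (Equiv.swap 0 p (e 0).succ) / y p))) := by
  rw [← Equiv.sum_comp (Equiv.Perm.decomposeFin.symm)
    (fun σ => AA q (n + 2) (fun i => y (σ i)) * φ (y (σ 0))), Fintype.sum_prod_type]
  refine Finset.sum_congr rfl fun p _ => ?_
  rw [Finset.mul_sum]
  refine Finset.sum_congr rfl fun e _ => ?_
  have hne : ∀ i : Fin (n + 1), Equiv.swap 0 p i.succ ≠ p := by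
    intro i h
    exact Fin.succ_ne_zero i ((Equiv.swap 0 p).injective
      (h.trans (Equiv.swap_apply_left 0 p).symm))
  have hσ0 : Equiv.Perm.decomposeFin.symm (p, e) 0 = p :=
    Equiv.Perm.decomposeFin_symm_apply_zero p e
  have hcons : (fun i => y (Equiv.Perm.decomposeFin.symm (p, e) i))
      = Fin.cons (y p) (fun i => y (Equiv.swap 0 p (e i).succ)) := by
    funext i
    refine Fin.cases ?_ (fun j => ?_) i
    · rw [Fin.cons_zero, hσ0]
    · rw [Fin.cons_succ, Equiv.Perm.decomposeFin_symm_apply_succ]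
  simp only [hcons, hσ0]
  have hga : 1 - q * (y (Equiv.swap 0 p (e 0).succ) / y p) ≠ 0 := by
    rw [mul_div_assoc']
    exact one_sub_div_ne_zero (h0 p) (hq2 _ p (hne (e 0)))
  have hAA : AA q (n + 2) (Fin.cons (y p) (fun i => y (Equiv.swap 0 p (e i).succ)))
      = AA q (n + 1) (fun i => y (Equiv.swap 0 p (e i).succ))
          * (1 - y (Equiv.swap 0 p (e 0).succ))
          * (∏ i : Fin (n + 1), ((1 - y (Equiv.swap 0 p (e i).succ) / y p)⁻¹
              * (1 - q * (y (Equiv.swap 0 p (e i).succ) / y p))))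
          / (1 - q * (y (Equiv.swap 0 p (e 0).succ) / y p)) := by
    rw [eq_div_iff hga]
    exact AA_cons q (y p) (fun i => y (Equiv.swap 0 p (e i).succ))
  rw [hAA]
  have hprod : ∏ i : Fin (n + 1), ((1 - y (Equiv.swap 0 p (e i).succ) / y p)⁻¹
        * (1 - q * (y (Equiv.swap 0 p (e i).succ) / y p)))
      = ∏ m ∈ Finset.univ.erase p, ((1 - y m / y p)⁻¹ * (1 - q * (y m / y p))) := by
    rw [Equiv.prod_comp e (fun i => ((1 - y (Equiv.swap 0 p i.succ) / y p)⁻¹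
      * (1 - q * (y (Equiv.swap 0 p i.succ) / y p)))),
      prod_swap_succ p (fun m => ((1 - y m / y p)⁻¹ * (1 - q * (y m / y p))))]
  rw [hprod, div_eq_mul_inv, div_eq_mul_inv]
  ring

lemma AA_one (y : Fin 1 → K) : AA q 1 y = 1 := by
  have h1 : (Finset.univ.filter fun p : Fin 1 × Fin 1 => p.2 < p.1) = ∅ := by decide
  have h2 : (Finset.univ.filter fun p : Fin 1 × Fin 1 => (p.2 : ℕ) + 1 < (p.1 : ℕ)) = ∅ := by
    decide
  have h3 : (Finset.univ.filter fun i : Fin 1 => 0 < (i : ℕ)) = ∅ := by decide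
  rw [AA, P1, P2, P3, h1, h2, h3, Finset.prod_empty, Finset.prod_empty, Finset.prod_empty]
  ring

lemma cancel_prod {N : ℕ} (y : Fin (N + 1) → K) (p : Fin (N + 1))
    (hinj : Function.Injective y) (h0 : ∀ i, y i ≠ 0)
    (hq2 : ∀ i j, i ≠ j → q * y i ≠ y j) :
    (∏ m ∈ Finset.univ.erase p, ((1 - y m / y p)⁻¹ * (1 - q * (y m / y p))))
        * ∏ m ∈ Finset.univ.erase p, ((1 - y m) / (1 - q * (y m / y p)))
      = ∏ m ∈ Finset.univ.erase p, ((1 - y m) * (1 - y m / y p)⁻¹) := by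
  rw [← Finset.prod_mul_distrib]
  refine Finset.prod_congr rfl fun m hm => ?_
  have hmp : m ≠ p := (Finset.mem_erase.mp hm).1
  have hnz : 1 - q * (y m / y p) ≠ 0 := by
    rw [mul_div_assoc']
    exact one_sub_div_ne_zero (h0 p) (hq2 m p hmp)
  rw [div_eq_mul_inv (1 - y m) (1 - q * (y m / y p))]
  calc (1 - y m / y p)⁻¹ * (1 - q * (y m / y p)) * ((1 - y m) * (1 - q * (y m / y p))⁻¹)
      = (1 - y m) * (1 - y m / y p)⁻¹
          * ((1 - q * (y m / y p)) * (1 - q * (y m / y p))⁻¹) := by ring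
    _ = (1 - y m) * (1 - y m / y p)⁻¹ := by rw [mul_inv_cancel₀ hnz, mul_one]

lemma V_id (hq : q ≠ 0) : ∀ (n : ℕ) (y : Fin (n + 1) → K) (u : K),
    Function.Injective y → (∀ i, y i ≠ 0) → (∀ i j, i ≠ j → q * y i ≠ y j) →
    u ≠ 0 → (∀ i, q * y i ≠ u) →
    ∑ σ : Equiv.Perm (Fin (n + 1)), AA q (n + 1) (fun i => y (σ i))
        * ((1 - y (σ 0)) / (1 - q * (y (σ 0) / u)))
      = ∏ i : Fin (n + 1), ((1 - y i) / (1 - q * (y i / u))) := by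
  intro n
  induction n with
  | zero =>
    intro y u hinj h0 hq2 hu hqu
    rw [Fintype.sum_subsingleton _ (1 : Equiv.Perm (Fin 1)), Fin.prod_univ_one, AA_one, one_mul]
    rfl
  | succ n IH =>
    intro y u hinj h0 hq2 hu hqu
    have hd := sum_decomp q y (fun x => (1 - x) / (1 - q * (x / u))) h0 hq2
    rw [hd]
    have hne : ∀ (p : Fin (n + 2)) (i : Fin (n + 1)), Equiv.swap 0 p i.succ ≠ p := by
      intro p i h
      exact Fin.succ_ne_zero i ((Equiv.swap 0 p).injective
        (h.trans (Equiv.swap_apply_left 0 p).symm))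
    have hinner : ∀ p : Fin (n + 2),
        (∑ e : Equiv.Perm (Fin (n + 1)),
            AA q (n + 1) (fun i => y (Equiv.swap 0 p (e i).succ))
              * ((1 - y (Equiv.swap 0 p (e 0).succ))
                / (1 - q * (y (Equiv.swap 0 p (e 0).succ) / y p))))
          = ∏ m ∈ Finset.univ.erase p, ((1 - y m) / (1 - q * (y m / y p))) := by
      intro p
      have hinj' : Function.Injective (fun i : Fin (n + 1) => y (Equiv.swap 0 p i.succ)) := by
        intro i j h
        exact Fin.succ_injective _ ((Equiv.swap 0 p).injective (hinj h))
      have h0' : ∀ i : Fin (n + 1), y (Equiv.swap 0 p i.succ) ≠ 0 := fun i => h0 _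
      have hq2' : ∀ i j : Fin (n + 1), i ≠ j →
          q * y (Equiv.swap 0 p i.succ) ≠ y (Equiv.swap 0 p j.succ) := by
        intro i j hij
        refine hq2 _ _ fun h => hij (Fin.succ_injective _ ((Equiv.swap 0 p).injective h))
      have hqu' : ∀ i : Fin (n + 1), q * y (Equiv.swap 0 p i.succ) ≠ y p := fun i =>
        hq2 _ p (hne p i)
      have := IH (fun i => y (Equiv.swap 0 p i.succ)) (y p) hinj' h0' hq2' (h0 p) hqu'
      exact this.trans (prod_swap_succ p (fun m => (1 - y m) / (1 - q * (y m / y p))))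
    calc ∑ p : Fin (n + 2), (1 - y p) / (1 - q * (y p / u))
          * (∏ m ∈ Finset.univ.erase p, ((1 - y m / y p)⁻¹ * (1 - q * (y m / y p))))
          * ∑ e : Equiv.Perm (Fin (n + 1)),
              AA q (n + 1) (fun i => y (Equiv.swap 0 p (e i).succ))
                * ((1 - y (Equiv.swap 0 p (e 0).succ))
                  / (1 - q * (y (Equiv.swap 0 p (e 0).succ) / y p)))
        = ∑ p : Fin (n + 2), (1 - y p) / (1 - q * (y p / u))
            * ∏ m ∈ Finset.univ.erase p, ((1 - y m) * (1 - y m / y p)⁻¹) := by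
          refine Finset.sum_congr rfl fun p _ => ?_
          rw [hinner p, mul_assoc, cancel_prod q y p hinj h0 hq2]
      _ = (∏ i : Fin (n + 2), (1 - y i))
            * ∑ p : Fin (n + 2), ((1 - q * (y p / u))⁻¹
                * ∏ m ∈ Finset.univ.erase p, (1 - y m / y p)⁻¹) := by
          rw [Finset.mul_sum]
          refine Finset.sum_congr rfl fun p _ => ?_
          rw [Finset.prod_mul_distrib,
            ← Finset.mul_prod_erase Finset.univ (fun i => 1 - y i) (Finset.mem_univ p),
            div_eq_mul_inv]
          ring
      _ = (∏ i : Fin (n + 2), (1 - y i)) * ∏ i : Fin (n + 2), (1 - q * (y i / u))⁻¹ := by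
          rw [sum_id2 q y hinj h0 hq u hu hqu]
      _ = ∏ i : Fin (n + 2), ((1 - y i) / (1 - q * (y i / u))) := by
          rw [← Finset.prod_mul_distrib]
          exact Finset.prod_congr rfl fun i _ => (div_eq_mul_inv _ _).symm

lemma main_id (hq : q ≠ 0) (n : ℕ) (y : Fin (n + 1) → K)
    (hinj : Function.Injective y) (h0 : ∀ i, y i ≠ 0)
    (hq2 : ∀ i j, i ≠ j → q * y i ≠ y j) :
    ∑ σ : Equiv.Perm (Fin (n + 1)), AA q (n + 1) (fun i => y (σ i)) = 1 := by
  cases n with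
  | zero =>
    rw [Fintype.sum_subsingleton _ (1 : Equiv.Perm (Fin 1)), AA_one]
  | succ n =>
    have hd := sum_decomp q y (fun _ => (1 : K)) h0 hq2
    simp only [mul_one, one_mul] at hd
    rw [hd]
    have hne : ∀ (p : Fin (n + 2)) (i : Fin (n + 1)), Equiv.swap 0 p i.succ ≠ p := by
      intro p i h
      exact Fin.succ_ne_zero i ((Equiv.swap 0 p).injective
        (h.trans (Equiv.swap_apply_left 0 p).symm))
    have hinner : ∀ p : Fin (n + 2),
        (∑ e : Equiv.Perm (Fin (n + 1)),
            AA q (n + 1) (fun i => y (Equiv.swap 0 p (e i).succ))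
              * ((1 - y (Equiv.swap 0 p (e 0).succ))
                / (1 - q * (y (Equiv.swap 0 p (e 0).succ) / y p))))
          = ∏ m ∈ Finset.univ.erase p, ((1 - y m) / (1 - q * (y m / y p))) := by
      intro p
      have hinj' : Function.Injective (fun i : Fin (n + 1) => y (Equiv.swap 0 p i.succ)) := by
        intro i j h
        exact Fin.succ_injective _ ((Equiv.swap 0 p).injective (hinj h))
      have h0' : ∀ i : Fin (n + 1), y (Equiv.swap 0 p i.succ) ≠ 0 := fun i => h0 _
      have hq2' : ∀ i j : Fin (n + 1), i ≠ j →
          q * y (Equiv.swap 0 p i.succ) ≠ y (Equiv.swap 0 p j.succ) := by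
        intro i j hij
        refine hq2 _ _ fun h => hij (Fin.succ_injective _ ((Equiv.swap 0 p).injective h))
      have hqu' : ∀ i : Fin (n + 1), q * y (Equiv.swap 0 p i.succ) ≠ y p := fun i =>
        hq2 _ p (hne p i)
      have := V_id q hq n (fun i => y (Equiv.swap 0 p i.succ)) (y p) hinj' h0' hq2'
        (h0 p) hqu'
      exact this.trans (prod_swap_succ p (fun m => (1 - y m) / (1 - q * (y m / y p))))
    calc ∑ p : Fin (n + 2),
          (∏ m ∈ Finset.univ.erase p, ((1 - y m / y p)⁻¹ * (1 - q * (y m / y p))))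
          * ∑ e : Equiv.Perm (Fin (n + 1)),
              AA q (n + 1) (fun i => y (Equiv.swap 0 p (e i).succ))
                * ((1 - y (Equiv.swap 0 p (e 0).succ))
                  / (1 - q * (y (Equiv.swap 0 p (e 0).succ) / y p)))
        = ∑ p : Fin (n + 2), ∏ m ∈ Finset.univ.erase p, ((1 - y m) * (1 - y m / y p)⁻¹) := by
          refine Finset.sum_congr rfl fun p _ => ?_
          rw [hinner p, cancel_prod q y p hinj h0 hq2]
      _ = 1 := sum_id1 y hinj h0

end Aux

/-- The field of rational functions `ℚ(q, z_1, …, z_n)`. -/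
noncomputable abbrev KQ (n : ℕ) : Type := FractionRing (MvPolynomial (Option (Fin n)) ℚ)

noncomputable def qV (n : ℕ) : KQ n :=
  algebraMap (MvPolynomial (Option (Fin n)) ℚ) (KQ n) (MvPolynomial.X none)

noncomputable def zV (n : ℕ) (i : Fin n) : KQ n :=
  algebraMap (MvPolynomial (Option (Fin n)) ℚ) (KQ n) (MvPolynomial.X (some i))

/-- for `n ≥ 1`,
`Σ_{σ∈S_n} σ{ ∏_{i>j} 1/(1-z_i/z_j) · ∏_{i>j+1}(1-q z_i/z_j) · ∏_{i≥2}(1-z_i) } = 1`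
in `ℚ(q, z_1, …, z_n)`. -/
theorem symmetrization_eq_one (n : ℕ) (hn : 1 ≤ n) :
    ∑ σ : Equiv.Perm (Fin n),
        (∏ p ∈ Finset.univ.filter (fun p : Fin n × Fin n => p.2 < p.1),
            (1 - zV n (σ p.1) / zV n (σ p.2))⁻¹) *
          (∏ p ∈ Finset.univ.filter (fun p : Fin n × Fin n => (p.2 : ℕ) + 1 < (p.1 : ℕ)),
            (1 - qV n * (zV n (σ p.1) / zV n (σ p.2)))) *
          ∏ i ∈ Finset.univ.filter (fun i : Fin n => 0 < (i : ℕ)), (1 - zV n (σ i)) = 1 := by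
  obtain ⟨m, rfl⟩ : ∃ m, n = m + 1 := ⟨n - 1, by omega⟩
  set N := m + 1
  have halg : Function.Injective
      (algebraMap (MvPolynomial (Option (Fin N)) ℚ) (KQ N)) :=
    IsFractionRing.injective _ _
  have hq : qV N ≠ 0 := by
    rw [qV, Ne, map_eq_zero_iff _ halg]
    exact MvPolynomial.X_ne_zero none
  have hinj : Function.Injective (zV N) := by
    intro i j h
    have := MvPolynomial.X_injective (halg h)
    exact Option.some_injective _ this
  have h0 : ∀ i, zV N i ≠ 0 := by
    intro i
    rw [zV, Ne, map_eq_zero_iff _ halg]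
    exact MvPolynomial.X_ne_zero _
  have hq2 : ∀ i j, i ≠ j → qV N * zV N i ≠ zV N j := by
    intro i j _ h
    rw [qV, zV, zV, ← map_mul] at h
    have h2 := halg h
    have h3 := congrArg (MvPolynomial.eval
      (fun v : Option (Fin N) => Option.elim v (2:ℚ) (fun _ => 1))) h2
    simp [MvPolynomial.eval_X] at h3
  have := main_id (qV N) hq m (zV N) hinj h0 hq2
  simp only [AA, P1, P2, P3] at this
  exact this
end

section
/- Let n ≥ 1 and let L_n(z_1,…,z_n) = Σ_{σ∈S_n} σ{ ∏_{i>j} 1/(1 - z_i/z_j) · ∏_{i>j+1} (1 - q z_i/z_j) · ∏_{i≥2} (1 - z_i) }. Then L_n is a polynomial in z_1, …, z_n, q, symmetric in z_1, …, z_n, of total degree at most n-1 in the variables z_1, …, z_n. -/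
open Finset

/-- `L_n(z_1,…,z_n) = Σ_{σ∈S_n} σ{ ∏_{i>j} 1/(1-z_i/z_j) · ∏_{i>j+1}(1-q z_i/z_j)
· ∏_{i≥2}(1-z_i) }` as an element of `ℚ(q, z_1, …, z_n)`. -/
noncomputable def Lfun (n : ℕ) : KQ n :=
  ∑ σ : Equiv.Perm (Fin n),
      (∏ p ∈ Finset.univ.filter (fun p : Fin n × Fin n => p.2 < p.1),
          (1 - zV n (σ p.1) / zV n (σ p.2))⁻¹) *
        (∏ p ∈ Finset.univ.filter (fun p : Fin n × Fin n => (p.2 : ℕ) + 1 < (p.1 : ℕ)),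
          (1 - qV n * (zV n (σ p.1) / zV n (σ p.2)))) *
        ∏ i ∈ Finset.univ.filter (fun i : Fin n => 0 < (i : ℕ)), (1 - zV n (σ i))

open MvPolynomial

/-! ### Generic auxiliary lemmas -/

section Generic
variable {R : Type*} [CommRing R]

lemma prod_pairs_eq {n : ℕ} (F : Fin n × Fin n → R) :
    ∏ p ∈ Finset.univ.filter (fun p : Fin n × Fin n => p.2 < p.1), F p
      = ∏ j : Fin n, ∏ i ∈ Finset.Ioi j, F (i, j) := by
  rw [Finset.prod_filter]
  rw [Fintype.prod_prod_type]
  rw [Finset.prod_comm]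
  refine Finset.prod_congr rfl fun j _ => ?_
  rw [← Finset.prod_filter]
  refine Finset.prod_congr ?_ (fun _ _ => rfl)
  ext i; simp

lemma vandermonde_perm {n : ℕ} (v : Fin n → R) (σ : Equiv.Perm (Fin n)) :
    ∏ p ∈ Finset.univ.filter (fun p : Fin n × Fin n => p.2 < p.1), (v (σ p.2) - v (σ p.1))
      = ((Equiv.Perm.sign σ : ℤ) : R) *
        ∏ p ∈ Finset.univ.filter (fun p : Fin n × Fin n => p.2 < p.1), (v p.2 - v p.1) := by
  have key : ∀ w : Fin n → R,
      ∏ p ∈ Finset.univ.filter (fun p : Fin n × Fin n => p.2 < p.1), (w p.2 - w p.1)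
        = (∏ j : Fin n, ∏ i ∈ Finset.Ioi j, (-1 : R)) * (Matrix.vandermonde w).det := by
    intro w
    rw [prod_pairs_eq, Matrix.det_vandermonde, ← Finset.prod_mul_distrib]
    refine Finset.prod_congr rfl fun j _ => ?_
    rw [← Finset.prod_mul_distrib]
    exact Finset.prod_congr rfl fun i _ => by ring
  have h1 := key (v ∘ σ)
  have h2 := key v
  simp only [Function.comp] at h1
  have hsub : Matrix.vandermonde (v ∘ σ) = (Matrix.vandermonde v).submatrix σ id := by
    ext i j; simp [Matrix.vandermonde, Matrix.submatrix]
  rw [h1, h2, hsub, Matrix.det_permute]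
  ring

end Generic

section Generic2
variable {F : Type*} [CommRing F] {ι : Type*} [DecidableEq ι]

lemma dvd_sub_rename_swap (i j : ι) (f : MvPolynomial ι F) :
    (X i - X j : MvPolynomial ι F) ∣ f - rename (Equiv.swap i j) f := by
  induction f using MvPolynomial.induction_on with
  | C a => simp
  | add f g hf hg =>
      have : f + g - rename (Equiv.swap i j) (f + g)
          = (f - rename (Equiv.swap i j) f) + (g - rename (Equiv.swap i j) g) := by
        rw [map_add]; ring
      rw [this]; exact dvd_add hf hg
  | mul_X f v hf =>
      have : f * X v - rename (Equiv.swap i j) (f * X v)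
          = (f - rename (Equiv.swap i j) f) * X v
            + rename (Equiv.swap i j) f * (X v - X (Equiv.swap i j v)) := by
        rw [map_mul, rename_X]; ring
      rw [this]
      refine dvd_add (Dvd.dvd.mul_right hf _) (Dvd.dvd.mul_left ?_ _)
      rcases eq_or_ne v i with rfl | hvi
      · rw [Equiv.swap_apply_left]
      rcases eq_or_ne v j with rfl | hvj
      · rw [Equiv.swap_apply_right]
        have h : (X v - X i : MvPolynomial ι F) = -(X i - X v) := by ring
        rw [h]; exact dvd_neg.mpr dvd_rfl
      · rw [Equiv.swap_apply_of_ne_of_ne hvi hvj, sub_self]; exact dvd_zero _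

lemma prod_primes_dvd' {M : Type*} [CommMonoidWithZero M] (s : Finset ι) (f : ι → M) (a : M)
    (hp : ∀ i ∈ s, Prime (f i)) (hdvd : ∀ i ∈ s, f i ∣ a)
    (hnd : ∀ i ∈ s, ∀ j ∈ s, i ≠ j → ¬ f i ∣ f j) : (∏ i ∈ s, f i) ∣ a := by
  classical
  induction s using Finset.induction generalizing a with
  | empty => simp
  | @insert i s hi ih =>
      obtain ⟨b, rfl⟩ := hdvd i (Finset.mem_insert_self i s)
      rw [Finset.prod_insert hi]
      refine mul_dvd_mul_left _ (ih b (fun j hj => hp j (Finset.mem_insert_of_mem hj))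
        (fun j hj => ?_)
        (fun j hj k hk hjk =>
          hnd j (Finset.mem_insert_of_mem hj) k (Finset.mem_insert_of_mem hk) hjk))
      have hji : j ≠ i := by rintro rfl; exact hi hj
      have := (hp j (Finset.mem_insert_of_mem hj)).2.2 _ _ (hdvd j (Finset.mem_insert_of_mem hj))
      rcases this with h | h
      · exact absurd h (hnd j (Finset.mem_insert_of_mem hj) i (Finset.mem_insert_self i s) hji)
      · exact h

end Generic2

section Generic3
variable {F : Type*} [CommRing F] [IsDomain F]

lemma prime_X_sub_X {m : ℕ} {i j : Fin (m+1)} (hij : i ≠ j) :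
    Prime (X i - X j : MvPolynomial (Fin (m+1)) F) := by
  classical
  set e1 := renameEquiv F (Equiv.swap i 0)
  have h0 : Equiv.swap i 0 i = 0 := Equiv.swap_apply_left i 0
  have hj : Equiv.swap i 0 j ≠ 0 := by
    intro h
    have : j = i := by
      have := congrArg (Equiv.swap i 0) h
      simpa [Equiv.swap_apply_left, Equiv.swap_apply_self] using this
    exact hij this.symm
  set j' := Equiv.swap i 0 j with hj'
  have hprime : Prime ((finSuccEquiv F m) (e1 (X i - X j))) := by
    have : e1 (X i - X j) = X (0 : Fin (m+1)) - X j' := by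
      simp [e1, renameEquiv_apply, h0, hj']
    rw [this, map_sub, finSuccEquiv_X_zero]
    have hsucc : (j' : Fin (m+1)) = (j'.pred hj).succ := (Fin.succ_pred j' hj).symm
    rw [hsucc, finSuccEquiv_X_succ]
    exact Polynomial.prime_X_sub_C _
  rw [← MulEquiv.prime_iff (e1 : MvPolynomial (Fin (m+1)) F ≃* MvPolynomial (Fin (m+1)) F),
      ← MulEquiv.prime_iff
        ((finSuccEquiv F m : MvPolynomial (Fin (m+1)) F ≃* Polynomial (MvPolynomial (Fin m) F)))]
  exact hprime

variable {ι : Type*}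

omit [IsDomain F] in
lemma homogeneousComponent_totalDegree_ne_zero {f : MvPolynomial ι F} (hf : f ≠ 0) :
    homogeneousComponent f.totalDegree f ≠ 0 := by
  classical
  obtain ⟨d, hd, hdeg⟩ : ∃ d ∈ f.support, (d.sum fun _ e => e) = f.totalDegree := by
    obtain ⟨d, hd, h⟩ := Finset.exists_mem_eq_sup f.support
      (support_nonempty.mpr hf) (fun d => d.sum fun _ e => e)
    exact ⟨d, hd, h.symm⟩
  intro h0
  have : coeff d (homogeneousComponent f.totalDegree f) = coeff d f := by
    rw [coeff_homogeneousComponent, if_pos]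
    rw [← hdeg]; rfl
  rw [h0] at this
  simp only [coeff_zero] at this
  exact (mem_support_iff.mp hd) this.symm

lemma totalDegree_mul_eq {f g : MvPolynomial ι F} (hf : f ≠ 0) (hg : g ≠ 0) :
    (f * g).totalDegree = f.totalDegree + g.totalDegree := by
  classical
  refine le_antisymm (totalDegree_mul f g) ?_
  set a := f.totalDegree
  set b := g.totalDegree
  by_contra hlt
  push_neg at hlt
  have hcomp : homogeneousComponent (a + b) (f * g) = 0 :=
    homogeneousComponent_eq_zero _ _ hlt
  have hdecomp : homogeneousComponent (a + b) (f * g)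
      = homogeneousComponent a f * homogeneousComponent b g := by
    conv_lhs => rw [← sum_homogeneousComponent f, ← sum_homogeneousComponent g]
    rw [Finset.sum_mul_sum]
    rw [map_sum]
    rw [Finset.sum_eq_single a]
    · rw [map_sum, Finset.sum_eq_single b]
      · exact homogeneousComponent_of_mem
          (mem_homogeneousSubmodule _ _ |>.mpr
            ((homogeneousComponent_isHomogeneous a f).mul
              (homogeneousComponent_isHomogeneous b g))) |>.trans (by rw [if_pos rfl])
      · intro c hc hcb
        refine homogeneousComponent_of_mem
          (mem_homogeneousSubmodule _ _ |>.mpr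
            ((homogeneousComponent_isHomogeneous a f).mul
              (homogeneousComponent_isHomogeneous c g))) |>.trans ?_
        rw [if_neg]; omega
      · intro h; exact absurd (Finset.self_mem_range_succ b) h
    · intro c hc hca
      rw [map_sum, Finset.sum_eq_zero]
      intro e he
      refine homogeneousComponent_of_mem
        (mem_homogeneousSubmodule _ _ |>.mpr
          ((homogeneousComponent_isHomogeneous c f).mul
            (homogeneousComponent_isHomogeneous e g))) |>.trans ?_
      rw [if_neg]
      have hc' : c ≤ a := Nat.lt_succ_iff.mp (Finset.mem_range.mp hc)
      have he' : e ≤ b := Nat.lt_succ_iff.mp (Finset.mem_range.mp he)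
      omega
    · intro h; exact absurd (Finset.self_mem_range_succ a) h
  rw [hdecomp] at hcomp
  exact mul_ne_zero (homogeneousComponent_totalDegree_ne_zero hf)
    (homogeneousComponent_totalDegree_ne_zero hg) hcomp

lemma totalDegree_prod_eq {κ : Type*} (s : Finset κ) (f : κ → MvPolynomial ι F)
    (h : ∀ k ∈ s, f k ≠ 0) :
    (∏ k ∈ s, f k).totalDegree = ∑ k ∈ s, (f k).totalDegree := by
  classical
  induction s using Finset.induction with
  | empty => simp
  | @insert k s hk ih =>
      rw [Finset.prod_insert hk, Finset.sum_insert hk,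
        totalDegree_mul_eq (h k (Finset.mem_insert_self k s))
          (Finset.prod_ne_zero_iff.mpr fun j hj => h j (Finset.mem_insert_of_mem hj)),
        ih (fun j hj => h j (Finset.mem_insert_of_mem hj))]

end Generic3

/-! ### The polynomials `D` (Vandermonde) and `A` (antisymmetrization) -/

noncomputable section LDefs

def PdS (n : ℕ) : Finset (Fin n × Fin n) := Finset.univ.filter (fun p => p.2 < p.1)
def PqS (n : ℕ) : Finset (Fin n × Fin n) :=
  Finset.univ.filter (fun p => (p.2 : ℕ) + 1 < (p.1 : ℕ))
def PaS (n : ℕ) : Finset (Fin n × Fin n) :=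
  (PdS n).filter (fun p => ¬ ((p.2 : ℕ) + 1 < (p.1 : ℕ)))
def IsetS (n : ℕ) : Finset (Fin n) := Finset.univ.filter (fun i => 0 < (i : ℕ))

abbrev SP (n : ℕ) := MvPolynomial (Fin n) (Polynomial ℚ)

def Dpoly (n : ℕ) : SP n := ∏ p ∈ PdS n, (X p.2 - X p.1)

def Ppoly (n : ℕ) (σ : Equiv.Perm (Fin n)) : SP n :=
  (∏ p ∈ PaS n, X (σ p.2)) *
    ((∏ p ∈ PqS n, (X (σ p.2) - C Polynomial.X * X (σ p.1))) *
      ∏ i ∈ IsetS n, (1 - X (σ i)))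

def epsR (R : Type*) [CommRing R] {n : ℕ} (σ : Equiv.Perm (Fin n)) : R :=
  ((Equiv.Perm.sign σ : ℤ) : R)

def Apoly (n : ℕ) : SP n := ∑ σ : Equiv.Perm (Fin n), epsR (SP n) σ * Ppoly n σ

end LDefs

section LLemmas
variable {n : ℕ}

lemma eps_mul_self (R : Type*) [CommRing R] (σ : Equiv.Perm (Fin n)) :
    epsR R σ * epsR R σ = 1 := by
  unfold epsR
  rw [← Int.cast_mul, ← Units.val_mul, Int.units_mul_self]
  norm_num

lemma eps_mul (R : Type*) [CommRing R] (σ τ : Equiv.Perm (Fin n)) :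
    epsR R (σ * τ) = epsR R σ * epsR R τ := by
  unfold epsR
  rw [← Int.cast_mul, ← Units.val_mul, map_mul]

lemma prod_Pd_split {M : Type*} [CommMonoid M] (f : Fin n × Fin n → M) :
    ∏ p ∈ PdS n, f p = (∏ p ∈ PqS n, f p) * ∏ p ∈ PaS n, f p := by
  rw [← Finset.prod_filter_mul_prod_filter_not (PdS n)
      (fun p => (p.2 : ℕ) + 1 < (p.1 : ℕ)) f]
  congr 1
  congr 1
  ext p
  simp only [PdS, PqS, Finset.mem_filter, Finset.mem_univ, true_and]
  constructor
  · rintro ⟨_, h⟩; exact h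
  · intro h; exact ⟨by rw [Fin.lt_def]; omega, h⟩

lemma rename_Ppoly (τ σ : Equiv.Perm (Fin n)) :
    rename (⇑τ) (Ppoly n σ) = Ppoly n (τ * σ) := by
  simp only [Ppoly, map_mul, map_prod, map_sub, map_one, rename_X, rename_C,
    Equiv.Perm.mul_apply]

lemma rename_Dpoly (τ : Equiv.Perm (Fin n)) :
    rename (⇑τ) (Dpoly n) = epsR (SP n) τ * Dpoly n := by
  have : rename (⇑τ) (Dpoly n) = ∏ p ∈ PdS n, (X (τ p.2) - X (τ p.1)) := by
    simp only [Dpoly, map_prod, map_sub, rename_X]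
  rw [this]
  exact vandermonde_perm X τ

lemma rename_Apoly (τ : Equiv.Perm (Fin n)) :
    rename (⇑τ) (Apoly n) = epsR (SP n) τ * Apoly n := by
  have h1 : rename (⇑τ) (Apoly n)
      = ∑ σ : Equiv.Perm (Fin n), epsR (SP n) σ * Ppoly n (τ * σ) := by
    simp only [Apoly, map_sum, map_mul, rename_Ppoly]
    refine Finset.sum_congr rfl fun σ _ => ?_
    congr 1
    unfold epsR
    rw [map_intCast]
  have h2 : ∀ σ : Equiv.Perm (Fin n),
      epsR (SP n) σ = epsR (SP n) τ * epsR (SP n) (τ * σ) := by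
    intro σ
    rw [eps_mul, ← mul_assoc, eps_mul_self, one_mul]
  rw [h1]
  calc ∑ σ : Equiv.Perm (Fin n), epsR (SP n) σ * Ppoly n (τ * σ)
      = ∑ σ : Equiv.Perm (Fin n),
          epsR (SP n) τ * (epsR (SP n) (τ * σ) * Ppoly n (τ * σ)) := by
        refine Finset.sum_congr rfl fun σ _ => ?_
        rw [h2 σ]; ring
    _ = epsR (SP n) τ * ∑ σ : Equiv.Perm (Fin n), epsR (SP n) (τ * σ) * Ppoly n (τ * σ) := by
        rw [Finset.mul_sum]
    _ = epsR (SP n) τ * Apoly n := by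
        exact congrArg (epsR (SP n) τ * ·)
          (Equiv.sum_comp (Equiv.mulLeft τ) (fun ρ => epsR (SP n) ρ * Ppoly n ρ))

end LLemmas

/-! ### Degree bounds -/

section LDeg
variable {n : ℕ}

lemma tdeg_X_sub_X {a b : Fin n} (hab : a ≠ b) :
    (X a - X b : SP n).totalDegree = 1 := by
  classical
  refine le_antisymm ((totalDegree_sub _ _).trans ?_) ?_
  · simp [totalDegree_X]
  · have hmem : Finsupp.single a 1 ∈ (X a - X b : SP n).support := by
      rw [mem_support_iff, coeff_sub, coeff_X', coeff_X', if_pos rfl, if_neg]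
      · norm_num
      · intro h
        exact hab (Finsupp.single_left_injective one_ne_zero h).symm
    have h := le_totalDegree hmem
    have hs : ((Finsupp.single a 1 : Fin n →₀ ℕ).sum fun _ e => e) = 1 := by simp
    rw [hs] at h
    exact h

lemma X_sub_X_ne_zero {a b : Fin n} (hab : a ≠ b) : (X a - X b : SP n) ≠ 0 := by
  intro h
  have := tdeg_X_sub_X (n := n) hab
  rw [h] at this
  simp at this

lemma Dpoly_totalDegree : (Dpoly n).totalDegree = (PdS n).card := by
  rw [Dpoly, totalDegree_prod_eq _ _ (fun p hp => X_sub_X_ne_zero (by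
    simp only [PdS, Finset.mem_filter] at hp; exact ne_of_lt hp.2))]
  rw [Finset.sum_congr rfl (fun p hp => tdeg_X_sub_X (by
    simp only [PdS, Finset.mem_filter] at hp; exact ne_of_lt hp.2))]
  simp

lemma Dpoly_ne_zero : Dpoly n ≠ 0 :=
  Finset.prod_ne_zero_iff.mpr fun p hp => X_sub_X_ne_zero (by
    simp only [PdS, Finset.mem_filter] at hp; exact ne_of_lt hp.2)

lemma card_split : (PqS n).card + (PaS n).card = (PdS n).card := by
  classical
  have := Finset.card_filter_add_card_filter_not (s := PdS n)
    (p := fun p => (p.2 : ℕ) + 1 < (p.1 : ℕ))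
  rw [← this]
  congr 2
  ext p
  simp only [PdS, PqS, Finset.mem_filter, Finset.mem_univ, true_and, Fin.lt_def]
  omega

lemma card_Iset : (IsetS n).card = n - 1 := by
  classical
  rcases n with - | m
  · simp [IsetS]
  · have : IsetS (m+1) = Finset.univ.erase 0 := by
      rw [IsetS, ← Finset.filter_ne']
      refine Finset.filter_congr fun i _ => ?_
      simp [Fin.pos_iff_ne_zero]
    rw [this, Finset.card_erase_of_mem (Finset.mem_univ _)]
    simp

lemma Ppoly_totalDegree (σ : Equiv.Perm (Fin n)) :
    (Ppoly n σ).totalDegree ≤ (PdS n).card + (n - 1) := by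
  have h1 : (∏ p ∈ PaS n, (X (σ p.2) : SP n)).totalDegree ≤ (PaS n).card := by
    refine (totalDegree_finset_prod _ _).trans ?_
    rw [Finset.sum_congr rfl (fun p _ => totalDegree_X _)]
    simp
  have h2 : (∏ p ∈ PqS n, (X (σ p.2) - C Polynomial.X * X (σ p.1) : SP n)).totalDegree
      ≤ (PqS n).card := by
    refine (totalDegree_finset_prod _ _).trans ?_
    have : ∀ p ∈ PqS n,
        (X (σ p.2) - C Polynomial.X * X (σ p.1) : SP n).totalDegree ≤ 1 := by
      intro p _
      refine (totalDegree_sub _ _).trans ?_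
      have : (C Polynomial.X * X (σ p.1) : SP n).totalDegree ≤ 1 := by
        refine (totalDegree_mul _ _).trans ?_
        simp [totalDegree_X, totalDegree_C]
      simp only [totalDegree_X]
      omega
    calc ∑ p ∈ PqS n, (X (σ p.2) - C Polynomial.X * X (σ p.1) : SP n).totalDegree
        ≤ ∑ p ∈ PqS n, 1 := Finset.sum_le_sum this
      _ = (PqS n).card := by simp
  have h3 : (∏ i ∈ IsetS n, (1 - X (σ i) : SP n)).totalDegree ≤ (IsetS n).card := by
    refine (totalDegree_finset_prod _ _).trans ?_
    have : ∀ i ∈ IsetS n, (1 - X (σ i) : SP n).totalDegree ≤ 1 := by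
      intro i _
      refine (totalDegree_sub _ _).trans ?_
      simp [totalDegree_X, totalDegree_one]
    calc ∑ i ∈ IsetS n, (1 - X (σ i) : SP n).totalDegree
        ≤ ∑ i ∈ IsetS n, 1 := Finset.sum_le_sum this
      _ = (IsetS n).card := by simp
  have := card_split (n := n)
  have hI := card_Iset (n := n)
  calc (Ppoly n σ).totalDegree
      ≤ (∏ p ∈ PaS n, (X (σ p.2) : SP n)).totalDegree +
        ((∏ p ∈ PqS n, (X (σ p.2) - C Polynomial.X * X (σ p.1) : SP n)) *
          ∏ i ∈ IsetS n, (1 - X (σ i) : SP n)).totalDegree := totalDegree_mul _ _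
    _ ≤ (PaS n).card + ((PqS n).card + (IsetS n).card) := by
        refine add_le_add h1 ((totalDegree_mul _ _).trans (add_le_add h2 h3))
    _ ≤ (PdS n).card + (n - 1) := by omega

lemma Apoly_totalDegree : (Apoly n).totalDegree ≤ (PdS n).card + (n - 1) := by
  refine (totalDegree_finset_sum _ _).trans (Finset.sup_le fun σ _ => ?_)
  refine (totalDegree_mul _ _).trans ?_
  have : (epsR (SP n) σ).totalDegree = 0 := by
    unfold epsR
    rcases Int.units_eq_one_or (Equiv.Perm.sign σ) with h | h <;> rw [h] <;> simp
  rw [this, zero_add]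
  exact Ppoly_totalDegree σ

end LDeg

/-! ### Divisibility by the Vandermonde -/

section Ldvd
variable {m : ℕ}

lemma mem_PdS {p : Fin (m+1) × Fin (m+1)} (hp : p ∈ PdS (m+1)) : p.2 ≠ p.1 := by
  simp only [PdS, Finset.mem_filter] at hp
  exact ne_of_lt hp.2

lemma X_sub_X_dvd_Apoly {p : Fin (m+1) × Fin (m+1)} (hp : p ∈ PdS (m+1)) :
    (X p.2 - X p.1 : SP (m+1)) ∣ Apoly (m+1) := by
  classical
  have hne : p.2 ≠ p.1 := mem_PdS hp
  have hswap : rename (Equiv.swap p.2 p.1) (Apoly (m+1)) = - Apoly (m+1) := by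
    have := rename_Apoly (Equiv.swap p.2 p.1)
    rw [this]
    unfold epsR
    rw [Equiv.Perm.sign_swap hne]
    push_cast
    ring
  have h2 : (X p.2 - X p.1 : SP (m+1)) ∣ 2 * Apoly (m+1) := by
    have := dvd_sub_rename_swap p.2 p.1 (Apoly (m+1))
    rw [hswap, sub_neg_eq_add, ← two_mul] at this
    exact this
  have hkey : Apoly (m+1) = C (Polynomial.C (2⁻¹ : ℚ)) * (2 * Apoly (m+1)) := by
    rw [← mul_assoc]
    have : (C (Polynomial.C (2⁻¹ : ℚ)) : SP (m+1)) * 2 = 1 := by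
      have h2' : (2 : SP (m+1)) = C (Polynomial.C (2 : ℚ)) := by
        push_cast; rw [map_ofNat, map_ofNat]
      rw [h2', ← map_mul, ← map_mul]
      norm_num
    rw [this, one_mul]
  rw [hkey]
  exact Dvd.dvd.mul_left h2 _

lemma not_dvd_X_sub_X {p q : Fin (m+1) × Fin (m+1)} (hp : p ∈ PdS (m+1))
    (hq : q ∈ PdS (m+1)) (hpq : p ≠ q) :
    ¬ ((X p.2 - X p.1 : SP (m+1)) ∣ (X q.2 - X q.1)) := by
  classical
  simp only [PdS, Finset.mem_filter, Finset.mem_univ, true_and] at hp hq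
  obtain ⟨v, hv, hv1, hv2⟩ : ∃ v, (v = q.1 ∨ v = q.2) ∧ v ≠ p.1 ∧ v ≠ p.2 := by
    by_cases h1 : q.1 = p.1
    · refine ⟨q.2, Or.inr rfl, ?_, ?_⟩
      · exact fun h => absurd (h ▸ h1 ▸ hq) (lt_irrefl _)
      · intro h
        exact hpq (Prod.ext (h1.symm ▸ rfl) h).symm
    · by_cases h2 : q.1 = p.2
      · refine ⟨q.2, Or.inr rfl, ?_, ?_⟩
        · exact ne_of_lt ((hq.trans_eq h2).trans hp)
        · exact ne_of_lt (hq.trans_eq h2)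
      · exact ⟨q.1, Or.inl rfl, h1, h2⟩
  intro hdvd
  set g : Fin (m+1) → Polynomial ℚ := fun x => if x = v then 1 else 0 with hg
  have hdvd2 := map_dvd (eval g) hdvd
  have hL : eval g (X p.2 - X p.1 : SP (m+1)) = 0 := by
    simp only [map_sub, eval_X, hg]
    rw [if_neg (Ne.symm hv2), if_neg (Ne.symm hv1), sub_zero]
  have hR : eval g (X q.2 - X q.1 : SP (m+1)) ≠ 0 := by
    rcases hv with rfl | rfl
    · have : q.2 ≠ q.1 := ne_of_lt hq
      simp only [map_sub, eval_X]
      rw [hg]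
      simp only [if_pos rfl, if_neg this]
      norm_num
    · have : q.1 ≠ q.2 := (ne_of_lt hq).symm
      simp only [map_sub, eval_X]
      rw [hg]
      simp only [if_pos rfl, if_neg this]
      norm_num
  rw [hL] at hdvd2
  exact hR (zero_dvd_iff.mp hdvd2)

lemma Dpoly_dvd_Apoly : Dpoly (m+1) ∣ Apoly (m+1) := by
  classical
  refine prod_primes_dvd' (PdS (m+1)) (fun p => (X p.2 - X p.1 : SP (m+1))) (Apoly (m+1))
    (fun p hp => prime_X_sub_X (mem_PdS hp))
    (fun p hp => X_sub_X_dvd_Apoly hp)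
    (fun p hp q hq hpq => not_dvd_X_sub_X hp hq hpq)

end Ldvd

/-! ### Evaluation into the fraction field -/

section LEval
variable {n : ℕ}

noncomputable def PhiK (n : ℕ) : SP n →+* KQ n :=
  MvPolynomial.eval₂Hom
    (Polynomial.eval₂RingHom
      ((algebraMap (MvPolynomial (Option (Fin n)) ℚ) (KQ n)).comp
        (algebraMap ℚ (MvPolynomial (Option (Fin n)) ℚ)))
      (qV n))
    (zV n)

lemma PhiK_X (i : Fin n) : PhiK n (X i) = zV n i := by
  simp [PhiK]

lemma PhiK_CX : PhiK n (C Polynomial.X) = qV n := by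
  simp [PhiK]

lemma z_ne_zero (i : Fin n) : zV n i ≠ 0 := by
  have : Function.Injective (algebraMap (MvPolynomial (Option (Fin n)) ℚ) (KQ n)) :=
    IsFractionRing.injective _ _
  intro h
  rw [zV, ← map_zero (algebraMap (MvPolynomial (Option (Fin n)) ℚ) (KQ n))] at h
  exact X_ne_zero _ (this h)

lemma z_sub_ne_zero {a b : Fin n} (hab : a ≠ b) : zV n a - zV n b ≠ 0 := by
  have hinj : Function.Injective (algebraMap (MvPolynomial (Option (Fin n)) ℚ) (KQ n)) :=
    IsFractionRing.injective _ _
  intro h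
  rw [zV, zV, ← map_sub,
    ← map_zero (algebraMap (MvPolynomial (Option (Fin n)) ℚ) (KQ n))] at h
  have := hinj h
  rw [sub_eq_zero] at this
  exact hab (by simpa using X_injective this)

lemma PhiK_D : PhiK n (Dpoly n) = ∏ p ∈ PdS n, (zV n p.2 - zV n p.1) := by
  simp [Dpoly, map_prod, PhiK_X]

lemma PhiK_D_ne_zero : PhiK n (Dpoly n) ≠ 0 := by
  rw [PhiK_D]
  refine Finset.prod_ne_zero_iff.mpr fun p hp => z_sub_ne_zero ?_
  simp only [PdS, Finset.mem_filter] at hp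
  exact ne_of_lt hp.2

lemma PhiK_P (σ : Equiv.Perm (Fin n)) :
    PhiK n (Ppoly n σ)
      = (∏ p ∈ PaS n, zV n (σ p.2)) *
          ((∏ p ∈ PqS n, (zV n (σ p.2) - qV n * zV n (σ p.1))) *
            ∏ i ∈ IsetS n, (1 - zV n (σ i))) := by
  simp [Ppoly, map_prod, PhiK_X, PhiK_CX]

lemma term_eq (σ : Equiv.Perm (Fin n)) :
    ((∏ p ∈ PdS n, (1 - zV n (σ p.1) / zV n (σ p.2))⁻¹) *
        (∏ p ∈ PqS n, (1 - qV n * (zV n (σ p.1) / zV n (σ p.2)))) *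
        ∏ i ∈ IsetS n, (1 - zV n (σ i))) * PhiK n (Dpoly n)
      = epsR (KQ n) σ * PhiK n (Ppoly n σ) := by
  have hstep1 : ∏ p ∈ PdS n, (1 - zV n (σ p.1) / zV n (σ p.2))⁻¹
      = (∏ p ∈ PdS n, zV n (σ p.2)) *
        (∏ p ∈ PdS n, (zV n (σ p.2) - zV n (σ p.1)))⁻¹ := by
    rw [← Finset.prod_inv_distrib, ← Finset.prod_mul_distrib]
    refine Finset.prod_congr rfl fun p _ => ?_
    rw [one_sub_div (z_ne_zero (σ p.2)), inv_div, div_eq_mul_inv]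
  have hstep2 : ∏ p ∈ PdS n, (zV n (σ p.2) - zV n (σ p.1))
      = epsR (KQ n) σ * ∏ p ∈ PdS n, (zV n p.2 - zV n p.1) :=
    vandermonde_perm (zV n) σ
  have hstep3 : ∏ p ∈ PqS n, (1 - qV n * (zV n (σ p.1) / zV n (σ p.2)))
      = (∏ p ∈ PqS n, (zV n (σ p.2) - qV n * zV n (σ p.1))) *
        (∏ p ∈ PqS n, zV n (σ p.2))⁻¹ := by
    rw [← Finset.prod_inv_distrib, ← Finset.prod_mul_distrib]
    refine Finset.prod_congr rfl fun p _ => ?_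
    have hb := z_ne_zero (σ p.2)
    field_simp
  have hstep4 : ∏ p ∈ PdS n, zV n (σ p.2)
      = (∏ p ∈ PqS n, zV n (σ p.2)) * ∏ p ∈ PaS n, zV n (σ p.2) :=
    prod_Pd_split _
  have hZq : (∏ p ∈ PqS n, zV n (σ p.2)) ≠ 0 :=
    Finset.prod_ne_zero_iff.mpr fun p _ => z_ne_zero _
  have hVD : (∏ p ∈ PdS n, (zV n p.2 - zV n p.1)) ≠ 0 := by
    refine Finset.prod_ne_zero_iff.mpr fun p hp => z_sub_ne_zero ?_
    simp only [PdS, Finset.mem_filter] at hp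
    exact ne_of_lt hp.2
  have heps := eps_mul_self (KQ n) σ
  have hepsne : epsR (KQ n) σ ≠ 0 := left_ne_zero_of_mul_eq_one heps
  rw [hstep1, hstep2, hstep3, hstep4, PhiK_P, PhiK_D]
  field_simp
  ring_nf
  rw [show epsR (KQ n) σ ^ 2 = 1 from by rw [sq]; exact heps]
  ring

lemma Lfun_eq_div : Lfun n * PhiK n (Dpoly n) = PhiK n (Apoly n) := by
  rw [Lfun, Finset.sum_mul]
  have hA : PhiK n (Apoly n)
      = ∑ σ : Equiv.Perm (Fin n), epsR (KQ n) σ * PhiK n (Ppoly n σ) := by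
    rw [Apoly, map_sum]
    refine Finset.sum_congr rfl fun σ _ => ?_
    rw [map_mul]
    congr 1
    unfold epsR
    exact map_intCast _ _
  rw [hA]
  exact Finset.sum_congr rfl fun σ _ => term_eq σ

end LEval

/-- `L_n` is a polynomial in `z_1, …, z_n, q`, symmetric in the `z_i`,
of total degree at most `n-1` in the `z_i`. We express it as the image of a
symmetric polynomial `p` in `n` variables with coefficients in `ℚ[q]`. -/
theorem Lfun_polynomial (n : ℕ) (hn : 1 ≤ n) :
    ∃ p : MvPolynomial (Fin n) (Polynomial ℚ),
      p.IsSymmetric ∧ p.totalDegree ≤ n - 1 ∧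
        MvPolynomial.eval₂
          (Polynomial.eval₂RingHom
            ((algebraMap (MvPolynomial (Option (Fin n)) ℚ) (KQ n)).comp
              (algebraMap ℚ (MvPolynomial (Option (Fin n)) ℚ)))
            (qV n))
          (zV n) p = Lfun n := by
  obtain ⟨m, rfl⟩ : ∃ m, n = m + 1 := ⟨n - 1, (Nat.succ_pred_eq_of_pos hn).symm⟩
  obtain ⟨p, hA⟩ := Dpoly_dvd_Apoly (m := m)
  have hDne : Dpoly (m+1) ≠ 0 := Dpoly_ne_zero
  refine ⟨p, ?_, ?_, ?_⟩
  · intro τ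
    have hepsne : epsR (SP (m+1)) τ ≠ 0 :=
      left_ne_zero_of_mul_eq_one (eps_mul_self _ τ)
    have h1 : epsR (SP (m+1)) τ * (Dpoly (m+1) * p)
        = epsR (SP (m+1)) τ * (Dpoly (m+1) * rename (⇑τ) p) := by
      conv_lhs => rw [← hA, ← rename_Apoly]
      rw [hA, map_mul, rename_Dpoly]
      ring
    exact (mul_left_cancel₀ hDne (mul_left_cancel₀ hepsne h1)).symm
  · by_cases hp : p = 0
    · simp [hp]
    · have h1 : (Apoly (m+1)).totalDegree
          = (Dpoly (m+1)).totalDegree + p.totalDegree := by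
        rw [hA]; exact totalDegree_mul_eq hDne hp
      have h2 := Apoly_totalDegree (n := m+1)
      rw [Dpoly_totalDegree] at h1
      omega
  · have hL := Lfun_eq_div (n := m+1)
    rw [hA, map_mul] at hL
    have hfin : PhiK (m+1) p = Lfun (m+1) := by
      refine mul_left_cancel₀ (PhiK_D_ne_zero (n := m+1)) ?_
      rw [← hL]
      ring
    simpa [PhiK, MvPolynomial.coe_eval₂Hom] using hfin
end
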